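/- Let c > 0, α > -1/2, χ > c² + α² - 1/4, and c² > α² - 1/4, and let a_α be as defined (0 if α² ≤ 1/4, ((α²-1/4)/c²)^{1/4} if α > 1/2). Suppose φ : (0,1] → ℝ is a C² solution of d/dt[(1-t²)φ'(t)] + (χ - c²t² + (1/4 - α²)/t²)φ(t) = 0 with ∫₀¹ φ(t)² dt = 1. Then sup over t in [a_α, 1] of √(1-t²)·|φ(t)| ≤ √2. -/

import Mathlib

open Set

set_option maxHeartbeats 4000000 in
theorem stmt_3 (c α χ : ℝ) (hc : 0 < c) (hα : -1/2 < α)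
    (hχ : χ > c ^ 2 + α ^ 2 - 1/4) (hca : c ^ 2 > α ^ 2 - 1/4)
    (aα : ℝ)
    (haα : aα = if α ^ 2 ≤ 1/4 then 0 else ((α ^ 2 - 1/4) / c ^ 2) ^ ((1 : ℝ)/4))
    (φ : ℝ → ℝ) (hφ : ContDiffOn ℝ 2 φ (Ioc 0 1))
    (hφcont : ContinuousOn φ (Icc 0 1))
    (hODE : ∀ t ∈ Ioo (0 : ℝ) 1,
      deriv (fun s => (1 - s ^ 2) * deriv φ s) t
        + (χ - c ^ 2 * t ^ 2 + (1/4 - α ^ 2) / t ^ 2) * φ t = 0)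
    (hnorm : ∫ t in (0:ℝ)..1, (φ t) ^ 2 = 1) :
    ∀ t ∈ Icc aα 1, Real.sqrt (1 - t ^ 2) * |φ t| ≤ Real.sqrt 2 := by
  have haα0 : 0 ≤ aα := by
    rw [haα]; split
    · exact le_refl 0
    · next h =>
        push_neg at h
        exact Real.rpow_nonneg (div_nonneg (by linarith) (by positivity)) _
  -- key fourth-power inequality in the case α² > 1/4
  have haα4 : ∀ t : ℝ, aα ≤ t → ¬ (α ^ 2 ≤ 1/4) → α ^ 2 - 1/4 ≤ c ^ 2 * t ^ 4 := by
    intro t ht hcase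
    have hm : 0 < α ^ 2 - 1/4 := by push_neg at hcase; linarith
    have haαv : aα = ((α ^ 2 - 1/4) / c ^ 2) ^ ((1:ℝ)/4) := by rw [haα, if_neg hcase]
    have hbase : (0:ℝ) ≤ (α ^ 2 - 1/4) / c ^ 2 := by positivity
    have h4 : aα ^ (4:ℕ) = (α ^ 2 - 1/4) / c ^ 2 := by
      rw [haαv, ← Real.rpow_natCast (((α ^ 2 - 1/4) / c ^ 2) ^ ((1:ℝ)/4)) 4,
        ← Real.rpow_mul hbase]
      norm_num
    have htp : aα ^ (4:ℕ) ≤ t ^ (4:ℕ) := pow_le_pow_left₀ haα0 ht 4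
    rw [h4] at htp
    have hc2 : 0 < c ^ 2 := by positivity
    calc α ^ 2 - 1/4 = ((α ^ 2 - 1/4) / c ^ 2) * c ^ 2 := by field_simp
      _ ≤ t ^ 4 * c ^ 2 := by apply mul_le_mul_of_nonneg_right htp hc2.le
      _ = c ^ 2 * t ^ 4 := by ring
  set Q : ℝ → ℝ := fun s => χ - c ^ 2 * s ^ 2 + (1/4 - α ^ 2) / s ^ 2 with hQdef
  set ψ : ℝ → ℝ := derivWithin φ (Ioc 0 1) with hψdef
  -- positivity of Q on (aα, 1]
  have hQpos : ∀ t : ℝ, aα ≤ t → 0 < t → t ≤ 1 → 0 < Q t := by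
    intro t ht ht0 ht1
    have ht2 : (0:ℝ) < t ^ 2 := by positivity
    have hqeq : Q t = (χ * t ^ 2 - c ^ 2 * t ^ 4 + (1/4 - α ^ 2)) / t ^ 2 := by
      simp only [hQdef]; field_simp
    rw [hqeq]
    apply div_pos _ ht2
    by_cases hcase : α ^ 2 ≤ 1/4
    · nlinarith [mul_pos ht2 (show (0:ℝ) < χ - (c ^ 2 + α ^ 2 - 1/4) by linarith),
        mul_nonneg (mul_nonneg (sq_nonneg c) ht2.le) (show (0:ℝ) ≤ 1 - t ^ 2 by nlinarith),
        mul_nonneg (show (0:ℝ) ≤ 1 - t ^ 2 by nlinarith) (show (0:ℝ) ≤ 1/4 - α ^ 2 by linarith)]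
    · have hm4 := haα4 t ht hcase
      push_neg at hcase
      nlinarith [mul_pos ht2 (show (0:ℝ) < χ - (c ^ 2 + α ^ 2 - 1/4) by linarith),
        mul_nonneg (show (0:ℝ) ≤ 1 - t ^ 2 by nlinarith)
          (show (0:ℝ) ≤ c ^ 2 * t ^ 2 - (α ^ 2 - 1/4) by nlinarith)]
  -- Q' is nonpositive on [aα, 1]
  have hQd : ∀ t : ℝ, 0 < t → HasDerivAt Q (-2 * c ^ 2 * t - 2 * (1/4 - α ^ 2) / t ^ 3) t := by
    intro t ht0
    have h1 : HasDerivAt (fun s : ℝ => s ^ 2) (2 * t) t := by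
      simpa using hasDerivAt_pow 2 t
    have ht' : t ≠ 0 := ne_of_gt ht0
    have h2 : HasDerivAt (fun s : ℝ => χ - c ^ 2 * s ^ 2) (-(c ^ 2 * (2 * t))) t := by
      simpa using (h1.const_mul (c ^ 2)).const_sub χ
    have h3 : HasDerivAt (fun s : ℝ => (1/4 - α ^ 2) / s ^ 2)
        ((0 * t ^ 2 - (1/4 - α ^ 2) * (2 * t)) / (t ^ 2) ^ 2) t :=
      (hasDerivAt_const t (1/4 - α ^ 2)).div h1 (by positivity)
    have hsum := h2.add h3
    have hval : -(c ^ 2 * (2 * t)) + (0 * t ^ 2 - (1/4 - α ^ 2) * (2 * t)) / (t ^ 2) ^ 2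
        = -2 * c ^ 2 * t - 2 * (1/4 - α ^ 2) / t ^ 3 := by
      field_simp
      ring
    rw [hval] at hsum
    rw [hQdef]
    exact hsum
  have hQdneg : ∀ t : ℝ, aα ≤ t → 0 < t → t ≤ 1 →
      -2 * c ^ 2 * t - 2 * (1/4 - α ^ 2) / t ^ 3 ≤ 0 := by
    intro t ht ht0 ht1
    have ht3 : (0:ℝ) < t ^ 3 := by positivity
    have heq : -2 * c ^ 2 * t - 2 * (1/4 - α ^ 2) / t ^ 3
        = (2 * (α ^ 2 - 1/4) - 2 * c ^ 2 * t ^ 4) / t ^ 3 := by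
      field_simp; ring
    rw [heq]
    apply div_nonpos_of_nonpos_of_nonneg _ ht3.le
    by_cases hcase : α ^ 2 ≤ 1/4
    · nlinarith [sq_nonneg c, sq_nonneg (t ^ 2), mul_nonneg (sq_nonneg c) (sq_nonneg (t^2))]
    · have := haα4 t ht hcase; linarith
  -- smoothness facts
  have hsub1 : Ioo (0:ℝ) 1 ⊆ Ioc 0 1 := Ioo_subset_Ioc_self
  have hψC1 : ContDiffOn ℝ 1 ψ (Ioc 0 1) := by
    apply hφ.derivWithin (uniqueDiffOn_Ioc 0 1)
    norm_num
  have hψcont : ContinuousOn ψ (Ioc 0 1) := hψC1.continuousOn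
  have hmem : ∀ t : ℝ, t ∈ Ioo (0:ℝ) 1 → Ioc (0:ℝ) 1 ∈ nhds t := by
    intro t ht
    exact Filter.mem_of_superset (isOpen_Ioo.mem_nhds ht) hsub1
  have hψeq : ∀ t : ℝ, t ∈ Ioo (0:ℝ) 1 → ψ t = deriv φ t := by
    intro t ht
    exact derivWithin_of_mem_nhds (hmem t ht)
  have hder1 : ∀ t : ℝ, t ∈ Ioo (0:ℝ) 1 → HasDerivAt φ (ψ t) t := by
    intro t ht
    have : DifferentiableAt ℝ φ t :=
      ((hφ.contDiffAt (hmem t ht)).differentiableAt (by norm_num))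
    rw [hψeq t ht]
    exact this.hasDerivAt
  have hder2 : ∀ t : ℝ, t ∈ Ioo (0:ℝ) 1 →
      HasDerivAt ψ ((-(Q t * φ t) + 2 * t * ψ t) / (1 - t ^ 2)) t := by
    intro t ht
    have h1t : (0:ℝ) < 1 - t ^ 2 := by nlinarith [ht.1, ht.2]
    have hψdiff : DifferentiableAt ℝ ψ t :=
      (hψC1.contDiffAt (hmem t ht)).differentiableAt (by norm_num)
    have hψda : HasDerivAt ψ (deriv ψ t) t := hψdiff.hasDerivAt
    -- compute deriv of g := fun s => (1-s²) * deriv φ s at t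
    have hgψ : HasDerivAt (fun s : ℝ => (1 - s ^ 2) * ψ s)
        (-(2 * t) * ψ t + (1 - t ^ 2) * deriv ψ t) t := by
      have hA : HasDerivAt (fun s : ℝ => 1 - s ^ 2) (-(2 * t)) t := by
        simpa using (hasDerivAt_pow 2 t).const_sub 1
      exact hA.mul hψda
    have heq : (fun s : ℝ => (1 - s ^ 2) * deriv φ s) =ᶠ[nhds t]
        (fun s : ℝ => (1 - s ^ 2) * ψ s) := by
      filter_upwards [isOpen_Ioo.mem_nhds ht] with s hs
      rw [hψeq s hs]
    have hg : HasDerivAt (fun s : ℝ => (1 - s ^ 2) * deriv φ s)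
        (-(2 * t) * ψ t + (1 - t ^ 2) * deriv ψ t) t := hgψ.congr_of_eventuallyEq heq
    have hODEt := hODE t ht
    rw [hg.deriv] at hODEt
    have hval : deriv ψ t = (-(Q t * φ t) + 2 * t * ψ t) / (1 - t ^ 2) := by
      rw [eq_div_iff h1t.ne']
      show deriv ψ t * (1 - t ^ 2)
        = -((χ - c ^ 2 * t ^ 2 + (1/4 - α ^ 2) / t ^ 2) * φ t) + 2 * t * ψ t
      linarith [hODEt]
    rw [← hval]
    exact hψda
  have hQcontIoc : ContinuousOn Q (Ioc 0 1) := by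
    rw [hQdef]
    apply ContinuousOn.add
    · exact continuousOn_const.sub (continuousOn_const.mul (continuousOn_pow 2))
    · apply ContinuousOn.div continuousOn_const (continuousOn_pow 2)
      intro s hs
      have : 0 < s := hs.1
      positivity
  clear_value Q ψ
  -- continuity of f := 2 s φ s ^ 2 on [0,1]
  set f : ℝ → ℝ := fun s => 2 * s * (φ s) ^ 2 with hfdef
  have hfcont : ContinuousOn f (Icc 0 1) := by
    apply ContinuousOn.mul
    · exact (continuousOn_const.mul continuousOn_id)
    · exact hφcont.pow 2
  have hfnonneg : ∀ s ∈ Icc (0:ℝ) 1, 0 ≤ f s := by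
    intro s hs
    have : 0 ≤ s := hs.1
    positivity
  set K : ℝ → ℝ := fun s => (1 - s ^ 2) * (φ s) ^ 2 + (1 - s ^ 2) ^ 2 / Q s * (ψ s) ^ 2
    with hKdef
  -- main bound for positive t
  have main : ∀ t ∈ Icc aα 1, 0 < t → (1 - t ^ 2) * (φ t) ^ 2 ≤ 2 := by
    intro t₀ ht₀ ht₀pos
    rcases eq_or_lt_of_le ht₀.2 with h1 | ht₀1
    · rw [h1]; norm_num
    -- t₀ < 1
    have hsubIoc : Icc t₀ 1 ⊆ Ioc (0:ℝ) 1 := fun s hs => ⟨lt_of_lt_of_le ht₀pos hs.1, hs.2⟩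
    have hsubIcc : Icc t₀ 1 ⊆ Icc (0:ℝ) 1 := fun s hs => ⟨le_trans ht₀pos.le hs.1, hs.2⟩
    have hQpos' : ∀ s ∈ Icc t₀ 1, 0 < Q s := fun s hs =>
      hQpos s (le_trans ht₀.1 hs.1) (lt_of_lt_of_le ht₀pos hs.1) hs.2
    set N : ℝ → ℝ := fun x => ∫ s in t₀..x, f s with hNdef
    set M : ℝ → ℝ := fun x => K x + N x with hMdef
    -- integrability
    have hfint : ∀ x ∈ Icc t₀ 1, IntervalIntegrable f MeasureTheory.volume t₀ x := by
      intro x hx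
      apply ContinuousOn.intervalIntegrable
      apply hfcont.mono
      rw [uIcc_of_le hx.1]
      exact fun s hs => hsubIcc ⟨hs.1, le_trans hs.2 hx.2⟩
    -- continuity of K on [t₀, 1]
    have hQcont : ContinuousOn Q (Icc t₀ 1) := hQcontIoc.mono hsubIoc
    have hKcont : ContinuousOn K (Icc t₀ 1) := by
      apply ContinuousOn.add
      · exact (continuousOn_const.sub (continuousOn_pow 2)).mul ((hφcont.mono hsubIcc).pow 2)
      · exact (((continuousOn_const.sub (continuousOn_pow 2)).pow 2).div hQcont
          (fun s hs => (hQpos' s hs).ne')).mul ((hψcont.mono hsubIoc).pow 2)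
    have hNcont : ContinuousOn N (Icc t₀ 1) := by
      have := intervalIntegral.continuousOn_primitive_interval
        (f := f) (μ := MeasureTheory.volume) (a := t₀) (b := 1)
        (by
          rw [uIcc_of_le ht₀1.le]
          exact (hfcont.mono hsubIcc).integrableOn_compact isCompact_Icc)
      rwa [uIcc_of_le ht₀1.le] at this
    have hMcont : ContinuousOn M (Icc t₀ 1) := hKcont.add hNcont
    -- derivative of M on the interior
    have hMderiv : ∀ x ∈ Ioo t₀ 1, HasDerivAt M
        (-2 * x * (φ x) ^ 2 - (1 - x ^ 2) ^ 2 * (-2 * c ^ 2 * x - 2 * (1/4 - α ^ 2) / x ^ 3)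
          / (Q x) ^ 2 * (ψ x) ^ 2 + f x) x := by
      intro x hx
      have hx01 : x ∈ Ioo (0:ℝ) 1 := ⟨lt_of_lt_of_le ht₀pos hx.1.le, hx.2⟩
      have hxI : x ∈ Icc t₀ 1 := ⟨hx.1.le, hx.2.le⟩
      have hQx : 0 < Q x := hQpos' x hxI
      have h1x : (0:ℝ) < 1 - x ^ 2 := by nlinarith [hx01.1, hx01.2]
      have hA : HasDerivAt (fun s : ℝ => 1 - s ^ 2) (-(2 * x)) x := by
        simpa using (hasDerivAt_pow 2 x).const_sub 1
      have hB := hder1 x hx01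
      have hC := hder2 x hx01
      have hD := hQd x hx01.1
      have term1 : HasDerivAt (fun s : ℝ => (1 - s ^ 2) * (φ s) ^ 2)
          (-(2 * x) * (φ x) ^ 2 + (1 - x ^ 2) * ((2 : ℕ) * φ x ^ 1 * ψ x)) x :=
        hA.mul (hB.pow 2)
      have term2 : HasDerivAt (fun s : ℝ => (1 - s ^ 2) ^ 2 / Q s * (ψ s) ^ 2)
          ((((2 : ℕ) * (1 - x ^ 2) ^ 1 * -(2 * x)) * Q x - (1 - x ^ 2) ^ 2
              * (-2 * c ^ 2 * x - 2 * (1/4 - α ^ 2) / x ^ 3)) / (Q x) ^ 2 * (ψ x) ^ 2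
            + (1 - x ^ 2) ^ 2 / Q x
              * ((2 : ℕ) * ψ x ^ 1 * ((-(Q x * φ x) + 2 * x * ψ x) / (1 - x ^ 2)))) x :=
        ((hA.pow 2).div hD hQx.ne').mul (hC.pow 2)
      have hx0 : x ≠ 0 := ne_of_gt hx01.1
      have h1x' : (1 : ℝ) - x ^ 2 ≠ 0 := h1x.ne'
      have hQx' : Q x ≠ 0 := hQx.ne'
      have hK' : HasDerivAt K
          (-2 * x * (φ x) ^ 2 - (1 - x ^ 2) ^ 2 * (-2 * c ^ 2 * x - 2 * (1/4 - α ^ 2) / x ^ 3)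
            / (Q x) ^ 2 * (ψ x) ^ 2) x := by
        have := term1.add term2
        refine this.congr_deriv ?_
        field_simp
        ring
      have hN' : HasDerivAt N (f x) x := by
        apply intervalIntegral.integral_hasDerivAt_right (hfint x hxI)
        · exact ContinuousAt.stronglyMeasurableAtFilter
            (isOpen_Ioo (a := (0:ℝ)) (b := 1))
            (fun y hy => hfcont.continuousAt (Icc_mem_nhds hy.1 hy.2)) x hx01
        · exact (hfcont.continuousAt (Icc_mem_nhds hx01.1 hx01.2))
      exact hK'.add hN'
    have hMmono : MonotoneOn M (Icc t₀ 1) := by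
      apply monotoneOn_of_deriv_nonneg (convex_Icc t₀ 1) hMcont
      · intro x hx
        rw [interior_Icc] at hx
        exact (hMderiv x hx).differentiableAt.differentiableWithinAt
      · intro x hx
        rw [interior_Icc] at hx
        rw [(hMderiv x hx).deriv]
        have hx01 : x ∈ Ioo (0:ℝ) 1 := ⟨lt_of_lt_of_le ht₀pos hx.1.le, hx.2⟩
        have hxI : x ∈ Icc t₀ 1 := ⟨hx.1.le, hx.2.le⟩
        have hQx : 0 < Q x := hQpos' x hxI
        have hqd := hQdneg x (le_trans ht₀.1 hxI.1) hx01.1 hx01.2.le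
        have h1 : 0 ≤ (1 - x ^ 2) ^ 2 * (-(-2 * c ^ 2 * x - 2 * (1/4 - α ^ 2) / x ^ 3))
            / (Q x) ^ 2 * (ψ x) ^ 2 := by
          apply mul_nonneg _ (sq_nonneg _)
          apply div_nonneg _ (sq_nonneg _)
          exact mul_nonneg (sq_nonneg _) (by linarith)
        have heq : -2 * x * (φ x) ^ 2
            - (1 - x ^ 2) ^ 2 * (-2 * c ^ 2 * x - 2 * (1/4 - α ^ 2) / x ^ 3)
              / (Q x) ^ 2 * (ψ x) ^ 2 + f x
            = (1 - x ^ 2) ^ 2 * (-(-2 * c ^ 2 * x - 2 * (1/4 - α ^ 2) / x ^ 3))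
              / (Q x) ^ 2 * (ψ x) ^ 2 := by
          rw [hfdef]; ring
        linarith [heq ▸ h1]
    -- conclude: K t₀ = M t₀ ≤ M 1
    have hMle : M t₀ ≤ M 1 := hMmono ⟨le_refl t₀, ht₀1.le⟩ ⟨ht₀1.le, le_refl 1⟩ ht₀1.le
    have hN0 : N t₀ = 0 := intervalIntegral.integral_same
    have hK1 : K 1 = 0 := by rw [hKdef]; norm_num
    have hKle : K t₀ ≤ N 1 := by
      have : K t₀ + N t₀ ≤ K 1 + N 1 := hMle
      rw [hN0, hK1] at this; linarith
    -- bound N 1 = ∫ t₀..1 f ≤ ∫ 0..1 f ≤ 2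
    have hint1 : IntervalIntegrable f MeasureTheory.volume 0 t₀ := by
      apply ContinuousOn.intervalIntegrable
      apply hfcont.mono
      rw [uIcc_of_le ht₀pos.le]
      exact fun s hs => ⟨hs.1, le_trans hs.2 ht₀1.le⟩
    have hint2 : IntervalIntegrable f MeasureTheory.volume t₀ 1 := hfint 1 ⟨ht₀1.le, le_refl 1⟩
    have hsplit : (∫ s in (0:ℝ)..t₀, f s) + (∫ s in t₀..1, f s) = ∫ s in (0:ℝ)..1, f s :=
      intervalIntegral.integral_add_adjacent_intervals hint1 hint2
    have hpos1 : 0 ≤ ∫ s in (0:ℝ)..t₀, f s := by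
      apply intervalIntegral.integral_nonneg ht₀pos.le
      intro s hs
      exact hfnonneg s ⟨hs.1, le_trans hs.2 ht₀1.le⟩
    have hle2 : (∫ s in (0:ℝ)..1, f s) ≤ ∫ s in (0:ℝ)..1, 2 * (φ s) ^ 2 := by
      apply intervalIntegral.integral_mono_on (by norm_num)
        (hint1.trans hint2)
      · apply ContinuousOn.intervalIntegrable
        rw [uIcc_of_le (by norm_num : (0:ℝ) ≤ 1)]
        exact continuousOn_const.mul (hφcont.pow 2)
      · intro s hs
        show 2 * s * (φ s) ^ 2 ≤ 2 * (φ s) ^ 2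
        nlinarith [mul_nonneg (by linarith [hs.2] : (0:ℝ) ≤ 1 - s) (sq_nonneg (φ s))]
    have hval2 : (∫ s in (0:ℝ)..1, 2 * (φ s) ^ 2) = 2 := by
      rw [intervalIntegral.integral_const_mul, hnorm]; norm_num
    have hN1 : N 1 ≤ 2 := by
      have : N 1 = ∫ s in t₀..1, f s := rfl
      rw [this]
      calc (∫ s in t₀..1, f s) ≤ ∫ s in (0:ℝ)..1, f s := by linarith [hsplit, hpos1]
        _ ≤ 2 := by linarith [hle2, hval2]
    -- (1-t₀²)φ² ≤ K t₀
    have hsecond : 0 ≤ (1 - t₀ ^ 2) ^ 2 / Q t₀ * (ψ t₀) ^ 2 := by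
      have hQt : 0 < Q t₀ := hQpos' t₀ ⟨le_refl t₀, ht₀1.le⟩
      positivity
    have : (1 - t₀ ^ 2) * (φ t₀) ^ 2 ≤ K t₀ := by
      rw [hKdef]; dsimp only; linarith
    linarith
  -- extend to t = 0 by continuity
  have main0 : ∀ t ∈ Icc aα 1, (1 - t ^ 2) * (φ t) ^ 2 ≤ 2 := by
    intro t ht
    rcases lt_or_eq_of_le (le_trans haα0 ht.1) with htpos | hteq
    · exact main t ht htpos
    · -- t = 0
      rw [← hteq]
      have haα0' : aα = 0 := le_antisymm (hteq ▸ ht.1) haα0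
      have hF : Filter.Tendsto (fun s => (1 - s ^ 2) * (φ s) ^ 2)
          (nhdsWithin 0 (Ioc (0:ℝ) 1)) (nhds ((1 - (0:ℝ) ^ 2) * (φ 0) ^ 2)) := by
        apply Filter.Tendsto.mul
        · have : Filter.Tendsto (fun s : ℝ => 1 - s ^ 2) (nhds 0) (nhds (1 - (0:ℝ) ^ 2)) := by
            exact (continuous_const.sub (continuous_pow 2)).tendsto 0
          exact this.mono_left nhdsWithin_le_nhds
        · have hc0 : ContinuousWithinAt φ (Icc 0 1) 0 :=
            hφcont 0 ⟨le_refl 0, by norm_num⟩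
          have : ContinuousWithinAt (fun s => (φ s) ^ 2) (Ioc 0 1) 0 :=
            ((hc0.mono Ioc_subset_Icc_self).pow 2)
          exact this
      have hNB : (nhdsWithin (0:ℝ) (Ioc (0:ℝ) 1)).NeBot := by
        rw [← mem_closure_iff_nhdsWithin_neBot, closure_Ioc (by norm_num : (0:ℝ) ≠ 1)]
        exact ⟨le_refl 0, by norm_num⟩
      have hbound : ∀ᶠ s in nhdsWithin 0 (Ioc (0:ℝ) 1),
          (1 - s ^ 2) * (φ s) ^ 2 ≤ 2 := by
        filter_upwards [self_mem_nhdsWithin] with s hs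
        exact main s ⟨haα0' ▸ hs.1.le, hs.2⟩ hs.1
      exact le_of_tendsto hF hbound
  -- final conversion
  intro t ht
  have h1t : 0 ≤ 1 - t ^ 2 := by
    have ht0 : 0 ≤ t := le_trans haα0 ht.1
    nlinarith [ht.2]
  have := main0 t ht
  calc Real.sqrt (1 - t ^ 2) * |φ t|
      = Real.sqrt ((1 - t ^ 2) * (φ t) ^ 2) := by
        rw [Real.sqrt_mul h1t, Real.sqrt_sq_eq_abs]
    _ ≤ Real.sqrt 2 := Real.sqrt_le_sqrt this
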